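/- Consequently, functionally eliminating a set W of vertices from a finite DAG G in any order yields the same DAG; the result has an edge from A to B (A, B ∉ W) if and only if there is a directed path from A to B in G all of whose internal vertices belong to W. -/

import Mathlib

/-- Functional elimination of a vertex `X` from a digraph. -/
def elimVertex {V : Type*} (E : V → V → Prop) (X : V) : V → V → Prop :=
  fun a b => a ≠ X ∧ b ≠ X ∧ (E a b ∨ (E a X ∧ E X b))

/-- Eliminating a list of vertices one at a time, in order. -/
def elimList {V : Type*} (E : V → V → Prop) (l : List V) : V → V → Prop :=
  l.foldl elimVertex E

namespace ElimAux

open Relation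

variable {V : Type*}

lemma elimList_cons (E : V → V → Prop) (X : V) (l : List V) :
    elimList E (X :: l) = elimList (elimVertex E X) l := rfl

lemma elimList_nil (E : V → V → Prop) : elimList E [] = E := rfl

/-- If all edges of `E` avoid `X`, so do all edges of any elimination. -/
lemma avoid (X : V) : ∀ (l : List V) (E : V → V → Prop),
    (∀ u v, E u v → u ≠ X ∧ v ≠ X) → ∀ a b, elimList E l a b → a ≠ X ∧ b ≠ X := by
  intro l
  induction l with
  | nil => intro E hE a b h; exact hE a b h
  | cons Y l ih =>
      intro E hE a b h
      rw [elimList_cons] at h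
      refine ih (elimVertex E Y) ?_ a b h
      rintro u v ⟨hu, hv, hE'⟩
      rcases hE' with h1 | ⟨h1, h2⟩
      · exact hE u v h1
      · exact ⟨(hE u Y h1).1, (hE Y v h2).2⟩

lemma not_elim_of_mem_left : ∀ (l : List V) (E : V → V → Prop) (a b : V),
    a ∈ l → ¬ elimList E l a b := by
  intro l
  induction l with
  | nil => intro E a b h; simp at h
  | cons Y l ih =>
      intro E a b h hcon
      rw [elimList_cons] at hcon
      rcases List.mem_cons.mp h with rfl | h
      · have := avoid a l (elimVertex E a) (by rintro u v ⟨hu, hv, _⟩; exact ⟨hu, hv⟩) a b hcon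
        exact this.1 rfl
      · exact ih (elimVertex E Y) a b h hcon

lemma not_elim_of_mem_right : ∀ (l : List V) (E : V → V → Prop) (a b : V),
    b ∈ l → ¬ elimList E l a b := by
  intro l
  induction l with
  | nil => intro E a b h; simp at h
  | cons Y l ih =>
      intro E a b h hcon
      rw [elimList_cons] at hcon
      rcases List.mem_cons.mp h with rfl | h
      · have := avoid b l (elimVertex E b) (by rintro u v ⟨hu, hv, _⟩; exact ⟨hu, hv⟩) a b hcon
        exact this.2 rfl
      · exact ih (elimVertex E Y) a b h hcon

lemma elimVertex_sub_transGen (E : V → V → Prop) (X : V) {u v : V}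
    (h : elimVertex E X u v) : TransGen E u v := by
  rcases h with ⟨_, _, h | ⟨h1, h2⟩⟩
  · exact TransGen.single h
  · exact (TransGen.single h1).tail h2

lemma acyclic_elimVertex (E : V → V → Prop) (X : V)
    (hG : ∀ v, ¬ TransGen E v v) : ∀ v, ¬ TransGen (elimVertex E X) v v := by
  intro v hv
  apply hG v
  have : TransGen (TransGen E) v v := TransGen.mono (fun a b h => elimVertex_sub_transGen E X h) v v hv
  rwa [Relation.transGen_idem] at this

/-- Key helper for the backward direction: a path that has passed through `X`
cannot touch `X` again, so it translates to an `elimVertex`-path. -/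
lemma lemmaD (E : V → V → Prop) (X : V) (l : List V)
    (hG : ∀ v, ¬ TransGen E v v) {w : V} :
    ∀ {d : V}, ReflTransGen (fun u v => v ∈ X :: l ∧ E u v) d w →
      TransGen E X d →
      ReflTransGen (fun u v => v ∈ l ∧ elimVertex E X u v) d w ∧ TransGen E X w := by
  intro d h
  induction h using ReflTransGen.head_induction_on with
  | refl => intro hXw; exact ⟨ReflTransGen.refl, hXw⟩
  | head hstep htail ih =>
      rename_i d c
      intro hXd
      obtain ⟨hcmem, hE⟩ := hstep
      have hcX : c ≠ X := by
        rintro rfl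
        exact hG _ (hXd.tail hE)
      have hdX : d ≠ X := by
        rintro rfl
        exact hG _ hXd
      have hcl : c ∈ l := by
        rcases List.mem_cons.mp hcmem with rfl | h
        · exact absurd rfl hcX
        · exact h
      obtain ⟨hpath, hXw⟩ := ih (hXd.tail hE)
      exact ⟨ReflTransGen.head ⟨hcl, hdX, hcX, Or.inl hE⟩ hpath, hXw⟩

/-- Backward direction of the one-step unfolding. -/
lemma lemmaB (E : V → V → Prop) (X : V) (l : List V)
    (hG : ∀ v, ¬ TransGen E v v) {b w : V} (hbX : b ≠ X) :
    ∀ {a : V}, ReflTransGen (fun u v => v ∈ X :: l ∧ E u v) a w →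
      a ≠ X → E w b →
      ∃ w', ReflTransGen (fun u v => v ∈ l ∧ elimVertex E X u v) a w' ∧
        elimVertex E X w' b := by
  intro a h
  induction h using ReflTransGen.head_induction_on with
  | refl => intro haX hwb; exact ⟨w, ReflTransGen.refl, haX, hbX, Or.inl hwb⟩
  | head hstep htail ih =>
      rename_i a c
      intro haX hwb
      obtain ⟨hcmem, hac⟩ := hstep
      by_cases hcX : c = X
      · subst hcX
        rcases htail.cases_head with rfl | ⟨d, ⟨hdmem, hcd⟩, htail'⟩
        · -- w = X
          exact ⟨a, ReflTransGen.refl, haX, hbX, Or.inr ⟨hac, hwb⟩⟩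
        · have hdX : d ≠ c := by
            rintro rfl
            exact hG _ (TransGen.single hcd)
          have hdl : d ∈ l := by
            rcases List.mem_cons.mp hdmem with rfl | h
            · exact absurd rfl hdX
            · exact h
          obtain ⟨hpath, hXw⟩ := lemmaD E c l hG htail' (TransGen.single hcd)
          have hwX : w ≠ c := by
            rintro rfl
            exact hG _ hXw
          refine ⟨w, ReflTransGen.head ⟨hdl, haX, hdX, Or.inr ⟨hac, hcd⟩⟩ hpath,
            hwX, hbX, Or.inl hwb⟩
      · have hcl : c ∈ l := by
          rcases List.mem_cons.mp hcmem with rfl | h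
          · exact absurd rfl hcX
          · exact h
        obtain ⟨w', hpath, hedge⟩ := ih hcX hwb
        exact ⟨w', ReflTransGen.head ⟨hcl, haX, hcX, Or.inl hac⟩ hpath, hedge⟩

/-- Forward direction: elimVertex paths expand to original paths. -/
lemma lemmaA_path (E : V → V → Prop) (X : V) (l : List V) {a w : V}
    (h : ReflTransGen (fun u v => v ∈ l ∧ elimVertex E X u v) a w) :
    ReflTransGen (fun u v => v ∈ X :: l ∧ E u v) a w := by
  induction h with
  | refl => exact ReflTransGen.refl
  | tail hp hstep ih =>
      obtain ⟨hmem, _, _, hE | ⟨h1, h2⟩⟩ := hstep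
      · exact ih.tail ⟨List.mem_cons_of_mem X hmem, hE⟩
      · exact (ih.tail ⟨List.mem_cons_self (a := X) (l := l), h1⟩).tail ⟨List.mem_cons_of_mem X hmem, h2⟩

/-- The key characterization of `elimList` by paths. -/
lemma key : ∀ (l : List V) (E : V → V → Prop),
    (∀ v, ¬ TransGen E v v) → l.Nodup → ∀ a b, a ∉ l → b ∉ l →
    (elimList E l a b ↔
      ∃ w, ReflTransGen (fun u v => v ∈ l ∧ E u v) a w ∧ E w b) := by
  intro l
  induction l with
  | nil =>
      intro E hG _ a b _ _
      rw [elimList_nil]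
      constructor
      · intro h; exact ⟨a, ReflTransGen.refl, h⟩
      · rintro ⟨w, hp, hE⟩
        rcases hp.cases_head with rfl | ⟨c, ⟨hc, _⟩, _⟩
        · exact hE
        · simp at hc
  | cons X l ih =>
      intro E hG hnd a b ha hb
      have haX : a ≠ X := fun h => ha (h ▸ List.mem_cons_self (a := X) (l := l))
      have hbX : b ≠ X := fun h => hb (h ▸ List.mem_cons_self (a := X) (l := l))
      have hal : a ∉ l := fun h => ha (List.mem_cons_of_mem X h)
      have hbl : b ∉ l := fun h => hb (List.mem_cons_of_mem X h)
      rw [elimList_cons]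
      rw [ih (elimVertex E X) (acyclic_elimVertex E X hG) (List.nodup_cons.mp hnd).2 a b hal hbl]
      constructor
      · rintro ⟨w, hp, hedge⟩
        have hp' := lemmaA_path E X l hp
        rcases hedge with ⟨hwX, _, hE | ⟨h1, h2⟩⟩
        · exact ⟨w, hp', hE⟩
        · exact ⟨X, hp'.tail ⟨List.mem_cons_self (a := X) (l := l), h1⟩, h2⟩
      · rintro ⟨w, hp, hE⟩
        exact lemmaB E X l hG hbX hp haX hE

end ElimAux

/-- Functionally eliminating a set `W` of vertices of a finite DAG in
any order yields the same DAG, and for `A, B ∉ W` the result has an edge `A → B`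
iff there is a directed path from `A` to `B` in `G` all of whose internal vertices
lie in `W`. -/
theorem elimList_order_independent_and_path_characterization
    {V : Type*} [Fintype V] (E : V → V → Prop)
    (hG : ∀ v, ¬ Relation.TransGen E v v)
    (W : Set V) (l₁ l₂ : List V)
    (h₁ : l₁.Nodup) (h₂ : l₂.Nodup)
    (hm₁ : ∀ v, v ∈ l₁ ↔ v ∈ W) (hm₂ : ∀ v, v ∈ l₂ ↔ v ∈ W) :
    (∀ a b, elimList E l₁ a b ↔ elimList E l₂ a b) ∧
    (∀ a b, a ∉ W → b ∉ W →
      (elimList E l₁ a b ↔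
        ∃ w, Relation.ReflTransGen (fun u v => v ∈ W ∧ E u v) a w ∧ E w b)) := by
  have hstep₁ : (fun u v : V => v ∈ l₁ ∧ E u v) = (fun u v => v ∈ W ∧ E u v) := by
    funext u v
    exact propext (and_congr_left' (hm₁ v))
  have hstep₂ : (fun u v : V => v ∈ l₂ ∧ E u v) = (fun u v => v ∈ W ∧ E u v) := by
    funext u v
    exact propext (and_congr_left' (hm₂ v))
  have key₁ : ∀ a b, a ∉ W → b ∉ W →
      (elimList E l₁ a b ↔
        ∃ w, Relation.ReflTransGen (fun u v => v ∈ W ∧ E u v) a w ∧ E w b) := by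
    intro a b ha hb
    rw [ElimAux.key l₁ E hG h₁ a b (fun h => ha ((hm₁ a).mp h)) (fun h => hb ((hm₁ b).mp h)),
      hstep₁]
  have key₂ : ∀ a b, a ∉ W → b ∉ W →
      (elimList E l₂ a b ↔
        ∃ w, Relation.ReflTransGen (fun u v => v ∈ W ∧ E u v) a w ∧ E w b) := by
    intro a b ha hb
    rw [ElimAux.key l₂ E hG h₂ a b (fun h => ha ((hm₂ a).mp h)) (fun h => hb ((hm₂ b).mp h)),
      hstep₂]
  refine ⟨?_, key₁⟩
  intro a b
  by_cases ha : a ∈ W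
  · constructor
    · intro h; exact absurd h (ElimAux.not_elim_of_mem_left l₁ E a b ((hm₁ a).mpr ha))
    · intro h; exact absurd h (ElimAux.not_elim_of_mem_left l₂ E a b ((hm₂ a).mpr ha))
  by_cases hb : b ∈ W
  · constructor
    · intro h; exact absurd h (ElimAux.not_elim_of_mem_right l₁ E a b ((hm₁ b).mpr hb))
    · intro h; exact absurd h (ElimAux.not_elim_of_mem_right l₂ E a b ((hm₂ b).mpr hb))
  rw [key₁ a b ha hb, key₂ a b ha hb]
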